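/- Let X = {z ∈ ℂ : |z| = 1} be the unit circle with the metric induced from ℂ, let α be a real number such that α/π is irrational, let f_1 : X → X be the identity map and f_2 : X → X the rotation f_2(z) = e^{iα} z, and let F be the Hutchinson operator of the IFS (X; f_1, f_2). Then X is the unique attractor of this IFS: F(X) = X, and for every nonempty compact set B ⊆ X, the iterates F^k(B) converge to X in the Hausdorff metric as k → ∞. -/

import Mathlib

open Metric Filter
open scoped Topology

lemma denseRange_zpow_exp (α : ℝ) (hα : Irrational (α / Real.pi)) :
    DenseRange (fun n : ℤ => Circle.exp α ^ n) := by
  set S : AddSubgroup ℝ := AddSubgroup.closure {α, 2 * Real.pi} with hSdef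
  have hS : Dense (S : Set ℝ) := by
    rcases S.dense_or_cyclic with h | ⟨a, ha⟩
    · exact h
    · exfalso
      have hαS : α ∈ S := AddSubgroup.subset_closure (by simp)
      have hπS : 2 * Real.pi ∈ S := AddSubgroup.subset_closure (by simp)
      rw [ha, AddSubgroup.mem_closure_singleton] at hαS hπS
      obtain ⟨m, hm⟩ := hαS
      obtain ⟨k, hk⟩ := hπS
      rw [zsmul_eq_mul] at hm hk
      have h2π : 2 * Real.pi ≠ 0 := by positivity
      have hk0 : (k : ℝ) ≠ 0 := by
        rintro h
        rw [h, zero_mul] at hk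
        exact h2π hk.symm
      refine hα ⟨2 * m / k, ?_⟩
      push_cast
      rw [div_eq_div_iff hk0 Real.pi_ne_zero]
      linear_combination (k:ℝ) * hm - (m:ℝ) * hk
  have hexp_surj : Function.Surjective (⇑Circle.exp) :=
    fun z => ⟨Complex.arg z, Circle.exp_arg z⟩
  have hd : Dense (⇑Circle.exp '' (S : Set ℝ)) :=
    hexp_surj.denseRange.dense_image Circle.exp.continuous hS
  refine hd.mono ?_
  rintro _ ⟨x, hx, rfl⟩
  induction hx using AddSubgroup.closure_induction with
  | mem y hy =>
    rcases hy with rfl | rfl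
    · exact ⟨1, (zpow_one _)⟩
    · exact ⟨0, by simp⟩
  | zero => exact ⟨0, by simp⟩
  | add y z _ _ hy hz =>
    obtain ⟨n, hn⟩ := hy
    obtain ⟨n', hn'⟩ := hz
    exact ⟨n + n', by simp only at hn hn' ⊢; rw [zpow_add, hn, hn', Circle.exp_add]⟩
  | neg y _ hy =>
    obtain ⟨n, hn⟩ := hy
    exact ⟨-n, by simp only at hn ⊢; rw [zpow_neg, hn, Circle.exp_neg]⟩

/-- Let `X` be the unit circle in `ℂ`, `α` a real number with `α / π` irrational, and let
`F` be the Hutchinson operator of the IFS consisting of the identity map and the rotation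
`z ↦ e^{iα} z`. Then `X` is the unique attractor of this IFS: `F X = X` and, for every
nonempty compact `B ⊆ X`, the iterates `F^[k] B` converge to `X` in the Hausdorff
metric. -/
theorem circle_attractor_of_identity_and_irrational_rotation (α : ℝ)
    (hα : Irrational (α / Real.pi))
    (F : Set Circle → Set Circle)
    (hF : ∀ S : Set Circle, F S = (id '' S) ∪ ((fun z => Circle.exp α * z) '' S)) :
    F Set.univ = Set.univ ∧
      ∀ B : Set Circle, B.Nonempty → IsCompact B →
        Tendsto (fun k => hausdorffDist (F^[k] B) (Set.univ : Set Circle))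
          atTop (𝓝 0) := by
  set g : Circle := Circle.exp α with hg
  have hdense : DenseRange (fun n : ℕ => g ^ n) :=
    denseRange_zpow_iff_pow.mp (denseRange_zpow_exp α hα)
  have hsub : ∀ S : Set Circle, S ⊆ F S := fun S => by
    rw [hF S, Set.image_id]
    exact Set.subset_union_left
  -- membership of orbit points in iterates
  have horbit : ∀ B : Set Circle, ∀ b ∈ B, ∀ k n : ℕ, n ≤ k → g ^ n * b ∈ F^[k] B := by
    intro B b hb k
    induction k with
    | zero =>
      intro n hn
      obtain rfl : n = 0 := Nat.le_zero.mp hn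
      simpa using hb
    | succ k ih =>
      intro n hn
      rw [Function.iterate_succ_apply']
      rcases Nat.lt_or_ge n (k + 1) with h | h
      · exact hsub _ (ih n (Nat.lt_succ_iff.mp h))
      · obtain rfl : n = k + 1 := le_antisymm hn h
        rw [hF]
        refine Set.mem_union_right _ ⟨g ^ k * b, ih k le_rfl, ?_⟩
        rw [pow_succ, mul_comm (g ^ k) g, mul_assoc]
  constructor
  · rw [hF, Set.image_id, Set.union_eq_self_of_subset_right (Set.subset_univ _)]
  · intro B hBne hBc
    obtain ⟨b, hb⟩ := hBne
    rw [Metric.tendsto_atTop]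
    intro ε hε
    -- cover the circle by finitely many balls around orbit points
    have hcover : (Set.univ : Set Circle) ⊆ ⋃ n : ℕ, ball (g ^ n * b) (ε / 2) := by
      intro z _
      have hdz : DenseRange (fun n : ℕ => g ^ n * b) := by
        have : Function.Surjective (fun w : Circle => w * b) := fun w => ⟨w * b⁻¹, by group⟩
        exact (this.denseRange.comp hdense (continuous_mul_right b) :)
      obtain ⟨y, hy, hyd⟩ := Metric.mem_closure_iff.mp (hdz z) (ε / 2) (by positivity)
      obtain ⟨n, rfl⟩ := hy
      exact Set.mem_iUnion.mpr ⟨n, by simpa [dist_comm] using hyd⟩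
    obtain ⟨t, ht⟩ := isCompact_univ.elim_finite_subcover
      (fun n : ℕ => ball (g ^ n * b) (ε / 2)) (fun n => isOpen_ball) hcover
    refine ⟨t.sup id, fun k hk => ?_⟩
    have hbound : hausdorffDist (F^[k] B) (Set.univ : Set Circle) ≤ ε / 2 := by
      apply hausdorffDist_le_of_infDist (by positivity)
      · intro x _
        rw [infDist_zero_of_mem (Set.mem_univ x)]
        positivity
      · intro z _
        obtain ⟨n, hn, hzn⟩ := Set.mem_iUnion₂.mp (ht (Set.mem_univ z))
        have hnk : n ≤ k := le_trans (Finset.le_sup (f := id) hn) hk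
        calc infDist z (F^[k] B) ≤ dist z (g ^ n * b) :=
              infDist_le_dist_of_mem (horbit B b hb k n hnk)
          _ ≤ ε / 2 := le_of_lt (by simpa [dist_comm] using hzn)
    have h0 : 0 ≤ hausdorffDist (F^[k] B) (Set.univ : Set Circle) := hausdorffDist_nonneg
    rw [Real.dist_eq, sub_zero, abs_of_nonneg h0]
    linarith
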